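/- arXiv:1708.03969 — 2 statements merged into one kernel-verified Lean document; each statement's English description precedes it below -/
import Mathlib

section
/- Every A-module of length 3 supported at m = (x,y) with minimal number of generators equal to 2 is isomorphic either to Hom_k(A/m², k) or to (A/m) ⊕ (A/I) for some ideal I ⊂ A with A/I of length 2 supported at the origin. -/
set_option maxHeartbeats 1000000
set_option synthInstance.maxHeartbeats 400000

open MvPolynomial

noncomputable section

variable (k : Type) [Field k]

/-- `m = (x,y) ⊂ A = k[x,y]`. -/
def mIdeal : Ideal (MvPolynomial (Fin 2) k) := Ideal.span {X 0, X 1}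

/-- The ring `A/m²`. -/
abbrev Qfat := MvPolynomial (Fin 2) k ⧸ (mIdeal k ^ 2)

/-- The `A = k[x,y]`-module structure on `M* = Hom_k(A/m², k)` given by `(a·f)(b) = f(ab)`:
the underlying ring homomorphism `A →+* End_k(M*)`. -/
def dualRingHom : MvPolynomial (Fin 2) k →+* Module.End k (Module.Dual k (Qfat k)) where
  toFun a := (LinearMap.mulLeft k ((Ideal.Quotient.mk (mIdeal k ^ 2) a : Qfat k))).dualMap
  map_one' := LinearMap.ext fun f => LinearMap.ext fun q => by
    simp [LinearMap.mulLeft, LinearMap.dualMap_apply]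
  map_mul' a b := LinearMap.ext fun f => LinearMap.ext fun q => by
    simp [LinearMap.mulLeft, LinearMap.dualMap_apply, mul_assoc, mul_comm, mul_left_comm]
  map_zero' := LinearMap.ext fun f => LinearMap.ext fun q => by
    simp [LinearMap.mulLeft, LinearMap.dualMap_apply]
  map_add' a b := LinearMap.ext fun f => LinearMap.ext fun q => by
    simp only [LinearMap.dualMap_apply, LinearMap.mulLeft_apply, LinearMap.add_apply]
    rw [(Ideal.Quotient.mk (mIdeal k ^ 2)).map_add, add_mul, map_add]

/-- The `A`-module structure on `M* = Hom_k(A/m², k)`, `(a·f)(b) = f(ab)`. -/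
instance dualMod : Module (MvPolynomial (Fin 2) k) (Module.Dual k (Qfat k)) :=
  Module.compHom _ (dualRingHom k)

/-- Compatibility of the `k`- and `A`-actions on `M*` (true since
`(C c · f)(q) = f(c • q) = c • f(q)` by `k`-linearity of `f`). -/
instance dualTower : IsScalarTower k (MvPolynomial (Fin 2) k) (Module.Dual k (Qfat k)) :=
  IsScalarTower.of_algebraMap_smul (fun c f => LinearMap.ext fun q => by
    show f ((Ideal.Quotient.mk (mIdeal k ^ 2)) (algebraMap k (MvPolynomial (Fin 2) k) c) * q) = _
    rw [← Ideal.Quotient.algebraMap_eq, ← IsScalarTower.algebraMap_apply]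
    rw [← Algebra.smul_def, map_smul]
    rfl)

end


namespace Classif

variable {k : Type} [Field k]

theorem sub_C_mem (p : MvPolynomial (Fin 2) k) : p - C (constantCoeff p) ∈ mIdeal k := by
  induction p using MvPolynomial.induction_on with
  | C a => simp [mIdeal]
  | add p q hp hq =>
      have h : p + q - C (constantCoeff (p+q)) =
        (p - C (constantCoeff p)) + (q - C (constantCoeff q)) := by
        rw [map_add, map_add]; ring
      rw [h]; exact Ideal.add_mem _ hp hq
  | mul_X p i hp =>
      have h : p * X i - C (constantCoeff (p * X i)) = p * X i := by
        simp [constantCoeff_X]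
      rw [h]
      exact Ideal.mul_mem_left _ p (Ideal.subset_span (by fin_cases i <;> simp))

theorem X0_mem : (X 0 : MvPolynomial (Fin 2) k) ∈ mIdeal k :=
  Ideal.subset_span (by simp)

theorem X1_mem : (X 1 : MvPolynomial (Fin 2) k) ∈ mIdeal k :=
  Ideal.subset_span (by simp)

theorem decomp (p : MvPolynomial (Fin 2) k) :
    ∃ a b : k, p - (C (constantCoeff p) + C a * X 0 + C b * X 1) ∈ mIdeal k ^ 2 := by
  obtain ⟨q, r, hqr⟩ := Ideal.mem_span_pair.mp (sub_C_mem p)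
  refine ⟨constantCoeff q, constantCoeff r, ?_⟩
  have h : p - (C (constantCoeff p) + C (constantCoeff q) * X 0 + C (constantCoeff r) * X 1)
      = (q - C (constantCoeff q)) * X 0 + (r - C (constantCoeff r)) * X 1 := by
    linear_combination -hqr
  rw [h, sq]
  exact Ideal.add_mem _ (Ideal.mul_mem_mul (sub_C_mem q) X0_mem)
    (Ideal.mul_mem_mul (sub_C_mem r) X1_mem)

theorem mIdeal_le_ker : mIdeal k ≤ RingHom.ker (constantCoeff : MvPolynomial (Fin 2) k →+* k) := by
  rw [mIdeal, Ideal.span_le]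
  rintro t ht
  rcases ht with rfl | ht
  · simp [RingHom.mem_ker]
  · rw [Set.mem_singleton_iff] at ht; subst ht; simp [RingHom.mem_ker]

theorem mem_mIdeal_of_cc_eq_zero {p : MvPolynomial (Fin 2) k} (h : constantCoeff p = 0) :
    p ∈ mIdeal k := by
  obtain ⟨a, b, hs⟩ := decomp p
  rw [h, map_zero, zero_add] at hs
  have h2 : p = (C a * X 0 + C b * X 1) + (p - (C a * X 0 + C b * X 1)) := by ring
  rw [h2]
  exact Ideal.add_mem _ (Ideal.add_mem _ (Ideal.mul_mem_left _ _ X0_mem)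
    (Ideal.mul_mem_left _ _ X1_mem)) (Ideal.pow_le_self two_ne_zero hs)

theorem mIdeal_eq_ker :
    mIdeal k = RingHom.ker (constantCoeff : MvPolynomial (Fin 2) k →+* k) :=
  le_antisymm mIdeal_le_ker (fun _ hp => mem_mIdeal_of_cc_eq_zero hp)

theorem cc_eq_zero_of_mem {p : MvPolynomial (Fin 2) k} (h : p ∈ mIdeal k) :
    constantCoeff p = 0 := mIdeal_le_ker h

theorem mIdeal_isPrime : (mIdeal k).IsPrime := by
  rw [mIdeal_eq_ker]; exact RingHom.ker_isPrime _

theorem C_smul {M : Type} [AddCommGroup M]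
    [Module (MvPolynomial (Fin 2) k) M] [Module k M]
    [IsScalarTower k (MvPolynomial (Fin 2) k) M] (c : k) (m : M) :
    (C c : MvPolynomial (Fin 2) k) • m = c • m := by
  rw [show (C c : MvPolynomial (Fin 2) k) = algebraMap k (MvPolynomial (Fin 2) k) c from rfl]
  exact algebraMap_smul _ _ _

theorem smul_eq_of_decomp {M : Type} [AddCommGroup M]
    [Module (MvPolynomial (Fin 2) k) M] [Module k M]
    [IsScalarTower k (MvPolynomial (Fin 2) k) M]
    (hm2 : ∀ s : MvPolynomial (Fin 2) k, s ∈ (mIdeal k)^2 → ∀ m : M, s • m = 0)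
    {p : MvPolynomial (Fin 2) k} {c a b : k}
    (h : p - (C c + C a * X 0 + C b * X 1) ∈ mIdeal k ^ 2) (m : M) :
    p • m = c • m + a • ((X 0 : MvPolynomial (Fin 2) k) • m) + b • ((X 1 : MvPolynomial (Fin 2) k) • m) := by
  have hp : p = (C c + C a * X 0 + C b * X 1) + (p - (C c + C a * X 0 + C b * X 1)) := by ring
  conv_lhs => rw [hp]
  rw [add_smul, hm2 _ h m, add_zero, add_smul, add_smul, mul_smul, mul_smul, C_smul, C_smul, C_smul]
theorem case1 (k : Type) [Field k]
    (M : Type) [AddCommGroup M] [Module (MvPolynomial (Fin 2) k) M] [Module k M]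
    [IsScalarTower k (MvPolynomial (Fin 2) k) M] [FiniteDimensional k M]
    (hlen : Module.finrank k M = 3)
    (hm2 : ∀ s : MvPolynomial (Fin 2) k, s ∈ (mIdeal k)^2 → ∀ m : M, s • m = 0)
    (u w e : M)
    (hLI : ∀ c0 c1 c2 : k, c0 • u + c1 • w + c2 • e = 0 → c0 = 0 ∧ c1 = 0 ∧ c2 = 0)
    (hSP : ∀ m : M, ∃ c0 c1 c2 : k, m = c0 • u + c1 • w + c2 • e)
    (a1 a2 a3 a4 : k)
    (hxu : (X 0 : MvPolynomial (Fin 2) k) • u = a1 • e)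
    (hyu : (X 1 : MvPolynomial (Fin 2) k) • u = a2 • e)
    (hxw : (X 0 : MvPolynomial (Fin 2) k) • w = a3 • e)
    (hyw : (X 1 : MvPolynomial (Fin 2) k) • w = a4 • e)
    (hxe : (X 0 : MvPolynomial (Fin 2) k) • e = 0)
    (hye : (X 1 : MvPolynomial (Fin 2) k) • e = 0)
    (hdet : a1 * a4 - a2 * a3 ≠ 0) :
    Nonempty (M ≃ₗ[MvPolynomial (Fin 2) k] Module.Dual k (Qfat k)) := by
  classical
  choose da db hd using fun p : MvPolynomial (Fin 2) k => decomp (k := k) p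
  -- the coordinate functional
  have hLI3 : LinearIndependent k ![u, w, e] := by
    apply Fintype.linearIndependent_iff.mpr
    intro g hg
    rw [Fin.sum_univ_three] at hg
    simp only [Matrix.cons_val_zero, Matrix.cons_val_one, Matrix.head_cons,
      Matrix.cons_val_two, Matrix.tail_cons] at hg
    obtain ⟨h0, h1, h2⟩ := hLI _ _ _ hg
    intro i; fin_cases i <;> assumption
  have hSP' : ⊤ ≤ Submodule.span k (Set.range ![u, w, e]) := by
    intro m _
    obtain ⟨c0, c1, c2, rfl⟩ := hSP m
    refine Submodule.add_mem _ (Submodule.add_mem _ ?_ ?_) ?_ <;>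
      refine Submodule.smul_mem _ _ (Submodule.subset_span ?_)
    · exact ⟨0, rfl⟩
    · exact ⟨1, rfl⟩
    · exact ⟨2, rfl⟩
  let bM : Module.Basis (Fin 3) k M := Module.Basis.mk hLI3 hSP'
  let lam : M →ₗ[k] k := bM.coord 2
  have hbM : ∀ i, bM i = ![u, w, e] i := fun i => Module.Basis.mk_apply hLI3 hSP' i
  have hlam : ∀ i, lam (![u, w, e] i) = if i = 2 then 1 else 0 := by
    intro i
    rw [← hbM]
    show bM.coord 2 (bM i) = _
    rw [Module.Basis.coord_apply, Module.Basis.repr_self, Finsupp.single_apply]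
  have hlu : lam u = 0 := by simpa using hlam 0
  have hlw : lam w = 0 := by simpa using hlam 1
  have hle : lam e = 1 := by simpa using hlam 2
  -- the liftQ maps
  have hker2 : ∀ m : M, mIdeal k ^ 2 ≤
      LinearMap.ker (LinearMap.toSpanSingleton (MvPolynomial (Fin 2) k) M m) := by
    intro m s hs
    rw [LinearMap.mem_ker, LinearMap.toSpanSingleton_apply]
    exact hm2 s hs m
  let ell : M → (Qfat k →ₗ[MvPolynomial (Fin 2) k] M) := fun m =>
    Submodule.liftQ ((mIdeal k)^2)
      (LinearMap.toSpanSingleton (MvPolynomial (Fin 2) k) M m) (hker2 m)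
  have hdualsmul : ∀ (p : MvPolynomial (Fin 2) k) (f : Module.Dual k (Qfat k)) (q : Qfat k),
      (p • f) q = f (Ideal.Quotient.mk (mIdeal k ^ 2) p * q) := fun p f q => rfl
  let Theta : M →ₗ[MvPolynomial (Fin 2) k] Module.Dual k (Qfat k) :=
    { toFun := fun m => lam ∘ₗ ((ell m).restrictScalars k)
      map_add' := by
        intro m1 m2
        apply LinearMap.ext
        intro q
        obtain ⟨p, rfl⟩ := Submodule.Quotient.mk_surjective _ q
        rw [LinearMap.add_apply]
        show lam (p • (m1 + m2)) = lam (p • m1) + lam (p • m2)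
        rw [smul_add, map_add]
      map_smul' := by
        intro p m
        apply LinearMap.ext
        intro q
        obtain ⟨r, rfl⟩ := Submodule.Quotient.mk_surjective _ q
        show lam (r • (p • m))
          = (p • (lam ∘ₗ ((ell m).restrictScalars k))) (Submodule.Quotient.mk r)
        rw [hdualsmul]
        have hqq : (Ideal.Quotient.mk (mIdeal k ^ 2) p
            * (Submodule.Quotient.mk r : Qfat k)) = Submodule.Quotient.mk (p * r) :=
          (map_mul (Ideal.Quotient.mk (mIdeal k ^ 2)) p r).symm
        rw [hqq]
        show lam (r • (p • m)) = lam ((p * r) • m)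
        rw [← mul_smul, mul_comm] }
  have hTapp : ∀ (m : M) (p : MvPolynomial (Fin 2) k),
      Theta m (Submodule.Quotient.mk p) = lam (p • m) := fun m p => rfl
  -- injectivity
  have hker : ∀ m : M, Theta m = 0 → m = 0 := by
    intro m hm
    obtain ⟨c0, c1, c2, rfl⟩ := hSP m
    set m' := c0 • u + c1 • w + c2 • e with hm'
    have happ : ∀ p : MvPolynomial (Fin 2) k, lam (p • m') = 0 := by
      intro p
      rw [← hTapp, hm]
      rfl
    have h1 : c2 = 0 := by
      have := happ 1
      rw [one_smul, hm', map_add, map_add, map_smul, map_smul, map_smul, hlu, hlw, hle] at this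
      simpa using this
    have t1 : (X 0 : MvPolynomial (Fin 2) k) • (c0 • u) = (c0 * a1) • e := by
      rw [smul_comm, hxu, smul_smul]
    have t2 : (X 0 : MvPolynomial (Fin 2) k) • (c1 • w) = (c1 * a3) • e := by
      rw [smul_comm, hxw, smul_smul]
    have t3 : (X 0 : MvPolynomial (Fin 2) k) • (c2 • e) = 0 := by
      rw [smul_comm, hxe, smul_zero]
    have hX0 : (X 0 : MvPolynomial (Fin 2) k) • m' = (c0 * a1 + c1 * a3) • e := by
      rw [hm', smul_add, smul_add, t1, t2, t3, add_zero, add_smul]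
    have s1 : (X 1 : MvPolynomial (Fin 2) k) • (c0 • u) = (c0 * a2) • e := by
      rw [smul_comm, hyu, smul_smul]
    have s2 : (X 1 : MvPolynomial (Fin 2) k) • (c1 • w) = (c1 * a4) • e := by
      rw [smul_comm, hyw, smul_smul]
    have s3 : (X 1 : MvPolynomial (Fin 2) k) • (c2 • e) = 0 := by
      rw [smul_comm, hye, smul_zero]
    have hX1 : (X 1 : MvPolynomial (Fin 2) k) • m' = (c0 * a2 + c1 * a4) • e := by
      rw [hm', smul_add, smul_add, s1, s2, s3, add_zero, add_smul]
    have h2 : c0 * a1 + c1 * a3 = 0 := by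
      have := happ (X 0)
      rw [hX0, map_smul, hle] at this
      simpa using this
    have h3 : c0 * a2 + c1 * a4 = 0 := by
      have := happ (X 1)
      rw [hX1, map_smul, hle] at this
      simpa using this
    have hc0 : c0 = 0 := by
      have h4 : c0 * (a1 * a4 - a2 * a3) = 0 := by linear_combination a4 * h2 - a3 * h3
      rcases mul_eq_zero.mp h4 with h | h
      · exact h
      · exact absurd h hdet
    have hc1 : c1 = 0 := by
      have h4 : c1 * (a1 * a4 - a2 * a3) = 0 := by linear_combination a1 * h3 - a2 * h2
      rcases mul_eq_zero.mp h4 with h | h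
      · exact h
      · exact absurd h hdet
    rw [hm', hc0, hc1, h1, zero_smul, zero_smul, zero_smul, add_zero, add_zero]
  have hinj : Function.Injective Theta := by
    intro x y hxy
    have := hker (x - y) (by rw [map_sub, hxy, sub_self])
    exact sub_eq_zero.mp this
  -- basis of Qfat
  let q1 : Qfat k := Submodule.Quotient.mk 1
  let qx : Qfat k := Submodule.Quotient.mk (X 0)
  let qy : Qfat k := Submodule.Quotient.mk (X 1)
  have hksmul : ∀ (c : k) (p : MvPolynomial (Fin 2) k),
      c • (Submodule.Quotient.mk p : Qfat k) = Submodule.Quotient.mk (C c * p) := by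
    intro c p
    rw [← C_smul (k := k) c (Submodule.Quotient.mk p : Qfat k), ← Submodule.Quotient.mk_smul,
      smul_eq_mul]
  have hspanQ : ∀ z : Qfat k, ∃ c0 c1 c2 : k, z = c0 • q1 + c1 • qx + c2 • qy := by
    intro z
    obtain ⟨p, rfl⟩ := Submodule.Quotient.mk_surjective _ z
    refine ⟨constantCoeff p, da p, db p, ?_⟩
    show Submodule.Quotient.mk p = constantCoeff p • (Submodule.Quotient.mk 1 : Qfat k)
      + da p • (Submodule.Quotient.mk (X 0) : Qfat k)
      + db p • (Submodule.Quotient.mk (X 1) : Qfat k)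
    rw [hksmul, hksmul, hksmul, mul_one, ← Submodule.Quotient.mk_add, ← Submodule.Quotient.mk_add,
      Submodule.Quotient.eq]
    exact hd p
  have hellapp1 : ∀ m : M, ((ell m).restrictScalars k) q1 = m := by
    intro m; show (1 : MvPolynomial (Fin 2) k) • m = m; exact one_smul _ _
  have hellappx : ∀ m : M, ((ell m).restrictScalars k) qx = (X 0 : MvPolynomial (Fin 2) k) • m :=
    fun m => rfl
  have hellappy : ∀ m : M, ((ell m).restrictScalars k) qy = (X 1 : MvPolynomial (Fin 2) k) • m :=
    fun m => rfl
  have hindQ : ∀ c0 c1 c2 : k, c0 • q1 + c1 • qx + c2 • qy = 0 →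
      c0 = 0 ∧ c1 = 0 ∧ c2 = 0 := by
    intro c0 c1 c2 h
    have hu' := congrArg ((ell u).restrictScalars k) h
    rw [map_add, map_add, map_smul, map_smul, map_smul, map_zero, hellapp1, hellappx, hellappy,
      hxu, hyu, smul_smul, smul_smul] at hu'
    obtain ⟨hc0, -, hcu⟩ := hLI c0 0 (c1 * a1 + c2 * a2)
      (by rw [zero_smul, add_zero, add_smul, ← add_assoc]; exact hu')
    have hw' := congrArg ((ell w).restrictScalars k) h
    rw [map_add, map_add, map_smul, map_smul, map_smul, map_zero, hellapp1, hellappx, hellappy,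
      hxw, hyw, smul_smul, smul_smul] at hw'
    obtain ⟨-, -, hcw⟩ := hLI 0 c0 (c1 * a3 + c2 * a4)
      (by rw [zero_smul, zero_add, add_smul, ← add_assoc]; exact hw')
    refine ⟨hc0, ?_, ?_⟩
    · have h4 : c1 * (a1 * a4 - a2 * a3) = 0 := by linear_combination a4 * hcu - a2 * hcw
      rcases mul_eq_zero.mp h4 with h' | h'
      · exact h'
      · exact absurd h' hdet
    · have h4 : c2 * (a1 * a4 - a2 * a3) = 0 := by linear_combination a1 * hcw - a3 * hcu
      rcases mul_eq_zero.mp h4 with h' | h'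
      · exact h'
      · exact absurd h' hdet
  have hLIQ : LinearIndependent k ![q1, qx, qy] := by
    apply Fintype.linearIndependent_iff.mpr
    intro g hg
    rw [Fin.sum_univ_three] at hg
    simp only [Matrix.cons_val_zero, Matrix.cons_val_one, Matrix.head_cons,
      Matrix.cons_val_two, Matrix.tail_cons] at hg
    obtain ⟨h0, h1, h2⟩ := hindQ _ _ _ hg
    intro i; fin_cases i <;> assumption
  have hrangeQ : Set.range ![q1, qx, qy] = ({q1, qx, qy} : Set (Qfat k)) := by
    ext z
    constructor
    · rintro ⟨i, rfl⟩
      fin_cases i <;> simp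
    · rintro (rfl | rfl | rfl)
      · exact ⟨0, rfl⟩
      · exact ⟨1, rfl⟩
      · exact ⟨2, rfl⟩
  have hspanQtop : Submodule.span k ({q1, qx, qy} : Set (Qfat k)) = ⊤ := by
    rw [eq_top_iff]
    intro z _
    obtain ⟨c0, c1, c2, hz⟩ := hspanQ z
    rw [hz]
    refine Submodule.add_mem _ (Submodule.add_mem _ ?_ ?_) ?_ <;>
      refine Submodule.smul_mem _ _ (Submodule.subset_span (by simp))
  haveI hfinQfat : Module.Finite k (Qfat k) :=
    ⟨Submodule.fg_def.mpr ⟨_, Set.toFinite _, hspanQtop⟩⟩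
  let bQ : Module.Basis (Fin 3) k (Qfat k) := Module.Basis.mk hLIQ (by rw [hrangeQ, hspanQtop])
  have hfinQ : Module.finrank k (Qfat k) = 3 := by
    rw [Module.finrank_eq_card_basis bQ, Fintype.card_fin]
  have hfinD : Module.finrank k (Module.Dual k (Qfat k)) = 3 := by
    rw [Subspace.dual_finrank_eq, hfinQ]
  -- surjectivity
  have hrinj : Function.Injective (Theta.restrictScalars k) := fun x y h => hinj h
  have h1 : Module.finrank k (LinearMap.range (Theta.restrictScalars k)) = 3 := by
    rw [LinearMap.finrank_range_of_inj hrinj, hlen]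
  have h2 : LinearMap.range (Theta.restrictScalars k) = ⊤ :=
    Submodule.eq_top_of_finrank_eq (by rw [h1, hfinD])
  have hsurj : Function.Surjective Theta := by
    intro f
    have : f ∈ LinearMap.range (Theta.restrictScalars k) := h2 ▸ Submodule.mem_top
    obtain ⟨m, hmm⟩ := this
    exact ⟨m, hmm⟩
  exact ⟨LinearEquiv.ofBijective Theta ⟨hinj, hsurj⟩⟩
theorem case2 (k : Type) [Field k]
    (M : Type) [AddCommGroup M] [Module (MvPolynomial (Fin 2) k) M] [Module k M]
    [IsScalarTower k (MvPolynomial (Fin 2) k) M] [FiniteDimensional k M]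
    (hm2 : ∀ s : MvPolynomial (Fin 2) k, s ∈ (mIdeal k)^2 → ∀ m : M, s • m = 0)
    (v w e : M)
    (hLI : ∀ c0 c1 c2 : k, c0 • v + c1 • w + c2 • e = 0 → c0 = 0 ∧ c1 = 0 ∧ c2 = 0)
    (hSP : ∀ m : M, ∃ c0 c1 c2 : k, m = c0 • v + c1 • w + c2 • e)
    (hxv : (X 0 : MvPolynomial (Fin 2) k) • v = 0)
    (hyv : (X 1 : MvPolynomial (Fin 2) k) • v = 0)
    (a b : k)
    (hxw : (X 0 : MvPolynomial (Fin 2) k) • w = a • e)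
    (hyw : (X 1 : MvPolynomial (Fin 2) k) • w = b • e)
    (hab : a ≠ 0 ∨ b ≠ 0) :
    ∃ I : Ideal (MvPolynomial (Fin 2) k),
      Module.finrank k (MvPolynomial (Fin 2) k ⧸ I) = 2 ∧
      I.radical = mIdeal k ∧
      Nonempty (M ≃ₗ[MvPolynomial (Fin 2) k]
        ((MvPolynomial (Fin 2) k ⧸ mIdeal k) × (MvPolynomial (Fin 2) k ⧸ I))) := by
  classical
  have hv0 : v ≠ 0 := by
    intro h
    have h1 := (hLI 1 0 0 (by simp [h])).1
    simp at h1
  choose da db hd using fun p : MvPolynomial (Fin 2) k => decomp (k := k) p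
  have hpv : ∀ p : MvPolynomial (Fin 2) k, p • v = constantCoeff p • v := by
    intro p
    rw [smul_eq_of_decomp hm2 (hd p) v, hxv, hyv, smul_zero, smul_zero, add_zero, add_zero]
  have hpw : ∀ p : MvPolynomial (Fin 2) k,
      p • w = constantCoeff p • w + (da p * a + db p * b) • e := by
    intro p
    rw [smul_eq_of_decomp hm2 (hd p) w, hxw, hyw, smul_smul, smul_smul, add_smul, add_assoc]
  have hkerv : LinearMap.ker (LinearMap.toSpanSingleton (MvPolynomial (Fin 2) k) M v)
      = mIdeal k := by
    ext p
    rw [LinearMap.mem_ker, LinearMap.toSpanSingleton_apply, hpv]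
    constructor
    · intro h
      rcases smul_eq_zero.mp h with h | h
      · exact mem_mIdeal_of_cc_eq_zero h
      · exact absurd h hv0
    · intro h; rw [cc_eq_zero_of_mem h, zero_smul]
  set I : Ideal (MvPolynomial (Fin 2) k) :=
      LinearMap.ker (LinearMap.toSpanSingleton (MvPolynomial (Fin 2) k) M w) with hI
  have hmemI : ∀ p : MvPolynomial (Fin 2) k,
      p ∈ I ↔ constantCoeff p = 0 ∧ da p * a + db p * b = 0 := by
    intro p
    rw [hI, LinearMap.mem_ker, LinearMap.toSpanSingleton_apply, hpw]
    constructor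
    · intro h
      have h0 : (0:k) • v + constantCoeff p • w + (da p * a + db p * b) • e = 0 := by
        rw [zero_smul, zero_add]; exact h
      obtain ⟨-, h1, h2⟩ := hLI _ _ _ h0
      exact ⟨h1, h2⟩
    · rintro ⟨h1, h2⟩; rw [h1, h2, zero_smul, zero_smul, add_zero]
  have hm2I : mIdeal k ^ 2 ≤ I := by
    intro s hs
    rw [hI, LinearMap.mem_ker, LinearMap.toSpanSingleton_apply]
    exact hm2 s hs w
  have hIm : I ≤ mIdeal k := fun p hp => mem_mIdeal_of_cc_eq_zero ((hmemI p).mp hp).1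
  have hrad : I.radical = mIdeal k := by
    apply le_antisymm
    · calc I.radical ≤ (mIdeal k).radical := Ideal.radical_mono hIm
        _ = mIdeal k := (mIdeal_isPrime).radical
    · rw [mIdeal, Ideal.span_le]
      rintro t ht
      rcases ht with rfl | ht
      · exact ⟨2, hm2I (by rw [pow_two, pow_two]; exact Ideal.mul_mem_mul X0_mem X0_mem)⟩
      · rw [Set.mem_singleton_iff] at ht; subst ht
        exact ⟨2, hm2I (by rw [pow_two, pow_two]; exact Ideal.mul_mem_mul X1_mem X1_mem)⟩
  set Φl := Submodule.liftQ (mIdeal k)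
      (LinearMap.toSpanSingleton (MvPolynomial (Fin 2) k) M v) (le_of_eq hkerv.symm) with hΦl
  set Φr := Submodule.liftQ I
      (LinearMap.toSpanSingleton (MvPolynomial (Fin 2) k) M w) (le_of_eq hI) with hΦr
  set Φ := Φl.coprod Φr with hΦ
  have happly : ∀ p q : MvPolynomial (Fin 2) k,
      Φ (Submodule.Quotient.mk p, Submodule.Quotient.mk q) = p • v + q • w := fun p q => rfl
  have hinj : Function.Injective Φ := by
    rw [← LinearMap.ker_eq_bot, eq_bot_iff]
    rintro ⟨z1, z2⟩ hz
    obtain ⟨p, rfl⟩ := Submodule.Quotient.mk_surjective _ z1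
    obtain ⟨q, rfl⟩ := Submodule.Quotient.mk_surjective _ z2
    rw [LinearMap.mem_ker, happly, hpv, hpw] at hz
    have h0 : constantCoeff p • v + constantCoeff q • w + (da q * a + db q * b) • e = 0 := by
      rw [← hz]; rw [add_assoc]
    obtain ⟨h1, h2, h3⟩ := hLI _ _ _ h0
    rw [Submodule.mem_bot, Prod.mk_eq_zero]
    constructor
    · rw [Submodule.Quotient.mk_eq_zero]; exact mem_mIdeal_of_cc_eq_zero h1
    · rw [Submodule.Quotient.mk_eq_zero]; exact (hmemI q).mpr ⟨h2, h3⟩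
  have hsurj : Function.Surjective Φ := by
    intro m
    obtain ⟨c0, c1, c2, rfl⟩ := hSP m
    have e1 : (C c0 : MvPolynomial (Fin 2) k) • v = c0 • v := C_smul _ _
    rcases hab with ha | hb
    · refine ⟨(Submodule.Quotient.mk (C c0),
        Submodule.Quotient.mk (C c1 + C (c2 * a⁻¹) * X 0)), ?_⟩
      have e2 : (C c1 + C (c2 * a⁻¹) * X 0 : MvPolynomial (Fin 2) k) • w = c1 • w + c2 • e := by
        rw [add_smul, C_smul, mul_smul, C_smul, hxw, smul_smul, mul_assoc,
          inv_mul_cancel₀ ha, mul_one]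
      rw [happly, e1, e2, ← add_assoc]
    · refine ⟨(Submodule.Quotient.mk (C c0),
        Submodule.Quotient.mk (C c1 + C (c2 * b⁻¹) * X 1)), ?_⟩
      have e2 : (C c1 + C (c2 * b⁻¹) * X 1 : MvPolynomial (Fin 2) k) • w = c1 • w + c2 • e := by
        rw [add_smul, C_smul, mul_smul, C_smul, hyw, smul_smul, mul_assoc,
          inv_mul_cancel₀ hb, mul_one]
      rw [happly, e1, e2, ← add_assoc]
  have hkerΦr : LinearMap.ker Φr = ⊥ :=
    Submodule.ker_liftQ_eq_bot _ _ _ (le_of_eq hI.symm)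
  have hΦrinj : Function.Injective Φr := LinearMap.ker_eq_bot.mp hkerΦr
  have hrinj : Function.Injective (Φr.restrictScalars k) := fun x y h => hΦrinj h
  haveI : FiniteDimensional k (MvPolynomial (Fin 2) k ⧸ I) :=
    FiniteDimensional.of_injective (Φr.restrictScalars k) hrinj
  have hr1 : Module.finrank k (LinearMap.range (Φr.restrictScalars k))
      = Module.finrank k (MvPolynomial (Fin 2) k ⧸ I) :=
    LinearMap.finrank_range_of_inj hrinj
  have hrange : LinearMap.range (Φr.restrictScalars k) = Submodule.span k {w, e} := by
    apply le_antisymm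
    · rintro x ⟨z, rfl⟩
      obtain ⟨q, rfl⟩ := Submodule.Quotient.mk_surjective _ z
      have hfz : (Φr.restrictScalars k) (Submodule.Quotient.mk q) = q • w := rfl
      rw [hfz, hpw q]
      exact Submodule.add_mem _
        (Submodule.smul_mem _ _ (Submodule.subset_span (Set.mem_insert _ _)))
        (Submodule.smul_mem _ _ (Submodule.subset_span (Set.mem_insert_of_mem _ rfl)))
    · rw [Submodule.span_le]
      rintro x (rfl | hx)
      · exact ⟨Submodule.Quotient.mk 1, one_smul _ x⟩
      · rw [Set.mem_singleton_iff] at hx; subst hx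
        rcases hab with ha | hb
        · refine ⟨Submodule.Quotient.mk (C a⁻¹ * X 0), ?_⟩
          show (C a⁻¹ * X 0 : MvPolynomial (Fin 2) k) • w = x
          rw [mul_smul, C_smul, hxw, smul_smul, inv_mul_cancel₀ ha, one_smul]
        · refine ⟨Submodule.Quotient.mk (C b⁻¹ * X 1), ?_⟩
          show (C b⁻¹ * X 1 : MvPolynomial (Fin 2) k) • w = x
          rw [mul_smul, C_smul, hyw, smul_smul, inv_mul_cancel₀ hb, one_smul]
  have hLIwe : LinearIndependent k ![w, e] := by
    apply Fintype.linearIndependent_iff.mpr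
    intro g hg
    rw [Fin.sum_univ_two] at hg
    simp only [Matrix.cons_val_zero, Matrix.cons_val_one, Matrix.head_cons] at hg
    have h0 : (0:k) • v + g 0 • w + g 1 • e = 0 := by rw [zero_smul, zero_add]; exact hg
    obtain ⟨-, h1, h2⟩ := hLI _ _ _ h0
    intro i; fin_cases i <;> assumption
  have hre : Set.range ![w, e] = ({w, e} : Set M) := by
    ext x
    simp only [Set.mem_range, Fin.exists_fin_two, Matrix.cons_val_zero, Matrix.cons_val_one,
      Matrix.head_cons, Set.mem_insert_iff, Set.mem_singleton_iff]
    constructor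
    · rintro (rfl | rfl) <;> simp
    · rintro (rfl | rfl) <;> simp
  have hfr : Module.finrank k (MvPolynomial (Fin 2) k ⧸ I) = 2 := by
    rw [← hr1, hrange, ← hre, finrank_span_eq_card hLIwe, Fintype.card_fin]
  exact ⟨I, hfr, hrad, ⟨(LinearEquiv.ofBijective Φ ⟨hinj, hsurj⟩).symm⟩⟩
end Classif

/-- Every `A = k[x,y]`-module of length `3` supported at `m = (x,y)` with
minimal number of generators `2` is isomorphic either to `Hom_k(A/m², k)` (with action
`(a·f)(b) = f(ab)`) or to `(A/m) ⊕ (A/I)` for some ideal `I` with `A/I` of length `2`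
supported at the origin. -/
theorem length_three_two_generators_classification
    (k : Type) [Field k] [IsAlgClosed k] [CharZero k]
    (M : Type) [AddCommGroup M]
    [Module (MvPolynomial (Fin 2) k) M] [Module k M]
    [IsScalarTower k (MvPolynomial (Fin 2) k) M]
    -- `M` has length `3`
    (hlen : Module.finrank k M = 3)
    -- `M` is supported entirely at the origin
    (hsupp : ∃ N : ℕ, (mIdeal k ^ N) • (⊤ : Submodule (MvPolynomial (Fin 2) k) M) = ⊥)
    -- the minimal number of generators of `M` is `2`
    (hgen : Module.finrank k (M ⧸ (Submodule.restrictScalars k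
        ((mIdeal k) • (⊤ : Submodule (MvPolynomial (Fin 2) k) M)))) = 2) :
    Nonempty (M ≃ₗ[MvPolynomial (Fin 2) k] Module.Dual k (Qfat k)) ∨
    ∃ I : Ideal (MvPolynomial (Fin 2) k),
      Module.finrank k (MvPolynomial (Fin 2) k ⧸ I) = 2 ∧
      I.radical = mIdeal k ∧
      Nonempty (M ≃ₗ[MvPolynomial (Fin 2) k]
        ((MvPolynomial (Fin 2) k ⧸ mIdeal k) × (MvPolynomial (Fin 2) k ⧸ I))) := by

  classical
  haveI hFD : FiniteDimensional k M := Module.finite_of_finrank_eq_succ hlen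
  choose da db hd using fun p : MvPolynomial (Fin 2) k => Classif.decomp (k := k) p
  set P : Submodule (MvPolynomial (Fin 2) k) M := mIdeal k • ⊤ with hPdef
  have hrank : Module.finrank k (M ⧸ Submodule.restrictScalars k P)
      + Module.finrank k (Submodule.restrictScalars k P) = Module.finrank k M :=
    Submodule.finrank_quotient_add_finrank _
  rw [hgen, hlen] at hrank
  have hrank1 : Module.finrank k (Submodule.restrictScalars k P) = 1 := by omega
  have hmP : mIdeal k • P = ⊥ := by
    by_contra hne
    have hle : mIdeal k • P ≤ P := Submodule.smul_le_right
    rcases lt_or_eq_of_le hle with hlt | heq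
    · have hlt' : Submodule.restrictScalars k (mIdeal k • P) < Submodule.restrictScalars k P := by
        refine lt_of_le_of_ne (fun x hx => hle hx) ?_
        intro hcon
        exact (ne_of_lt hlt) (Submodule.restrictScalars_injective k _ _ hcon)
      have hfr := Submodule.finrank_lt_finrank_of_lt hlt'
      rw [hrank1] at hfr
      have h0 : Module.finrank k (Submodule.restrictScalars k (mIdeal k • P)) = 0 := by omega
      rw [Submodule.finrank_eq_zero, Submodule.restrictScalars_eq_bot_iff] at h0
      exact hne h0
    · obtain ⟨N, hN⟩ := hsupp
      have key : ∀ n : ℕ, P ≤ mIdeal k ^ n • (⊤ : Submodule (MvPolynomial (Fin 2) k) M) := by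
        intro n
        induction n with
        | zero => rw [pow_zero, Ideal.one_eq_top, Submodule.top_smul]; exact le_top
        | succ n ih =>
          calc P = mIdeal k • P := heq.symm
            _ ≤ mIdeal k • (mIdeal k ^ n • ⊤) := Submodule.smul_mono le_rfl ih
            _ = (mIdeal k • mIdeal k ^ n) • ⊤ := (Submodule.smul_assoc _ _ _).symm
            _ = mIdeal k ^ (n+1) • ⊤ := by rw [Ideal.smul_eq_mul, ← pow_succ']
      have hPbot : P ≤ ⊥ := le_trans (key N) (le_of_eq hN)
      have hPb : Submodule.restrictScalars k P = ⊥ := by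
        rw [Submodule.restrictScalars_eq_bot_iff, ← le_bot_iff]; exact hPbot
      rw [hPb, finrank_bot] at hrank1
      exact one_ne_zero hrank1.symm
  have hm2 : ∀ s : MvPolynomial (Fin 2) k, s ∈ (mIdeal k)^2 → ∀ m : M, s • m = 0 := by
    intro s hs m
    have hmem : s • m ∈ (mIdeal k ^ 2) • (⊤ : Submodule (MvPolynomial (Fin 2) k) M) :=
      Submodule.smul_mem_smul hs Submodule.mem_top
    have h2 : (mIdeal k ^ 2) • (⊤ : Submodule (MvPolynomial (Fin 2) k) M) = mIdeal k • P := by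
      rw [pow_two, ← Ideal.smul_eq_mul, Submodule.smul_assoc, ← hPdef]
    rw [h2, hmP, Submodule.mem_bot] at hmem
    exact hmem
  let bQuot : Module.Basis (Fin 2) k (M ⧸ Submodule.restrictScalars k P) :=
    Module.finBasisOfFinrankEq k _ hgen
  obtain ⟨u, hu⟩ := Submodule.Quotient.mk_surjective _ (bQuot 0)
  obtain ⟨w0, hw0⟩ := Submodule.Quotient.mk_surjective _ (bQuot 1)
  let bP : Module.Basis (Fin 1) k (Submodule.restrictScalars k P) :=
    Module.finBasisOfFinrankEq k _ hrank1
  set e : M := (bP 0 : M) with he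
  have heP : e ∈ P := (bP 0).2
  have he0 : e ≠ 0 := fun h => Module.Basis.ne_zero bP 0 (Submodule.coe_eq_zero.mp h)
  have hePspan : ∀ z : M, z ∈ P → ∃ c : k, z = c • e := by
    intro z hz
    have hrep := bP.sum_repr ⟨z, hz⟩
    rw [Fin.sum_univ_one] at hrep
    refine ⟨bP.repr ⟨z, hz⟩ 0, ?_⟩
    have h := congrArg Subtype.val hrep
    rw [Submodule.coe_smul] at h
    exact h.symm
  have hxuP : (X 0 : MvPolynomial (Fin 2) k) • u ∈ P :=
    Submodule.smul_mem_smul Classif.X0_mem Submodule.mem_top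
  have hyuP : (X 1 : MvPolynomial (Fin 2) k) • u ∈ P :=
    Submodule.smul_mem_smul Classif.X1_mem Submodule.mem_top
  have hxwP : (X 0 : MvPolynomial (Fin 2) k) • w0 ∈ P :=
    Submodule.smul_mem_smul Classif.X0_mem Submodule.mem_top
  have hywP : (X 1 : MvPolynomial (Fin 2) k) • w0 ∈ P :=
    Submodule.smul_mem_smul Classif.X1_mem Submodule.mem_top
  have hxe : (X 0 : MvPolynomial (Fin 2) k) • e = 0 := by
    have h := Submodule.smul_mem_smul Classif.X0_mem heP
    rwa [hmP, Submodule.mem_bot] at h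
  have hye : (X 1 : MvPolynomial (Fin 2) k) • e = 0 := by
    have h := Submodule.smul_mem_smul Classif.X1_mem heP
    rwa [hmP, Submodule.mem_bot] at h
  obtain ⟨a1, ha1⟩ := hePspan _ hxuP
  obtain ⟨a2, ha2⟩ := hePspan _ hyuP
  obtain ⟨a3, ha3⟩ := hePspan _ hxwP
  obtain ⟨a4, ha4⟩ := hePspan _ hywP
  have hmkQe : (Submodule.Quotient.mk e : M ⧸ Submodule.restrictScalars k P) = 0 :=
    (Submodule.Quotient.mk_eq_zero _).mpr heP
  have hLI : ∀ c0 c1 c2 : k, c0 • u + c1 • w0 + c2 • e = 0 → c0 = 0 ∧ c1 = 0 ∧ c2 = 0 := by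
    intro c0 c1 c2 h
    have h3 := congrArg (Submodule.Quotient.mk (p := Submodule.restrictScalars k P)) h
    rw [Submodule.Quotient.mk_add, Submodule.Quotient.mk_add, Submodule.Quotient.mk_smul,
      Submodule.Quotient.mk_smul, Submodule.Quotient.mk_smul, hu, hw0, hmkQe, smul_zero,
      add_zero, Submodule.Quotient.mk_zero] at h3
    have h4 := Fintype.linearIndependent_iff.mp bQuot.linearIndependent ![c0, c1]
      (by rw [Fin.sum_univ_two]; simpa using h3)
    have hc0 : c0 = 0 := h4 0
    have hc1 : c1 = 0 := h4 1
    rw [hc0, hc1, zero_smul, zero_smul, zero_add, zero_add] at h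
    exact ⟨hc0, hc1, (smul_eq_zero.mp h).resolve_right he0⟩
  have hSP : ∀ m : M, ∃ c0 c1 c2 : k, m = c0 • u + c1 • w0 + c2 • e := by
    intro m
    set z : M ⧸ Submodule.restrictScalars k P := Submodule.Quotient.mk m with hz
    have hrep := bQuot.sum_repr z
    rw [Fin.sum_univ_two] at hrep
    have hmem : m - ((bQuot.repr z 0) • u + (bQuot.repr z 1) • w0) ∈ P := by
      have : (Submodule.Quotient.mk (m - ((bQuot.repr z 0) • u + (bQuot.repr z 1) • w0))
          : M ⧸ Submodule.restrictScalars k P) = 0 := by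
        rw [Submodule.Quotient.mk_sub, Submodule.Quotient.mk_add, Submodule.Quotient.mk_smul,
          Submodule.Quotient.mk_smul, hu, hw0, ← hz, hrep, sub_self]
      exact (Submodule.Quotient.mk_eq_zero _).mp this
    obtain ⟨c2, hc2⟩ := hePspan _ hmem
    refine ⟨bQuot.repr z 0, bQuot.repr z 1, c2, ?_⟩
    rw [sub_eq_iff_eq_add] at hc2
    rw [hc2]
    abel
  by_cases hdet : a1 * a4 - a2 * a3 = 0
  · -- degenerate case
    have hnz : ¬ (a1 = 0 ∧ a2 = 0 ∧ a3 = 0 ∧ a4 = 0) := by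
      rintro ⟨z1, z2, z3, z4⟩
      subst z1; subst z2; subst z3; subst z4
      have hP0 : P ≤ (⊥ : Submodule (MvPolynomial (Fin 2) k) M) := by
        rw [hPdef]
        refine Submodule.smul_le.mpr ?_
        intro r hr m _
        obtain ⟨c0, c1, c2, rfl⟩ := hSP m
        have t1 : (X 0 : MvPolynomial (Fin 2) k) • (c0 • u) = 0 := by
          rw [smul_comm, ha1, zero_smul, smul_zero]
        have t2 : (X 0 : MvPolynomial (Fin 2) k) • (c1 • w0) = 0 := by
          rw [smul_comm, ha3, zero_smul, smul_zero]
        have t3 : (X 0 : MvPolynomial (Fin 2) k) • (c2 • e) = 0 := by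
          rw [smul_comm, hxe, smul_zero]
        have s1 : (X 1 : MvPolynomial (Fin 2) k) • (c0 • u) = 0 := by
          rw [smul_comm, ha2, zero_smul, smul_zero]
        have s2 : (X 1 : MvPolynomial (Fin 2) k) • (c1 • w0) = 0 := by
          rw [smul_comm, ha4, zero_smul, smul_zero]
        have s3 : (X 1 : MvPolynomial (Fin 2) k) • (c2 • e) = 0 := by
          rw [smul_comm, hye, smul_zero]
        have hX0m : (X 0 : MvPolynomial (Fin 2) k) • (c0 • u + c1 • w0 + c2 • e) = 0 := by
          rw [smul_add, smul_add, t1, t2, t3, add_zero, add_zero]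
        have hX1m : (X 1 : MvPolynomial (Fin 2) k) • (c0 • u + c1 • w0 + c2 • e) = 0 := by
          rw [smul_add, smul_add, s1, s2, s3, add_zero, add_zero]
        have hm0 : r • (c0 • u + c1 • w0 + c2 • e) = 0 := by
          rw [Classif.smul_eq_of_decomp hm2 (hd r), hX0m, hX1m, smul_zero, smul_zero,
            Classif.cc_eq_zero_of_mem hr, zero_smul, add_zero, add_zero]
        rw [Submodule.mem_bot]
        exact hm0
      have : e = 0 := Submodule.mem_bot _ |>.mp (hP0 heP)
      exact he0 this
    by_cases h12 : a1 = 0 ∧ a2 = 0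
    · obtain ⟨z1, z2⟩ := h12
      have hxu0 : (X 0 : MvPolynomial (Fin 2) k) • u = 0 := by rw [ha1, z1, zero_smul]
      have hyu0 : (X 1 : MvPolynomial (Fin 2) k) • u = 0 := by rw [ha2, z2, zero_smul]
      have hab : a3 ≠ 0 ∨ a4 ≠ 0 := by
        by_contra hcon
        push_neg at hcon
        exact hnz ⟨z1, z2, hcon.1, hcon.2⟩
      exact Or.inr (Classif.case2 k M hm2 u w0 e hLI hSP hxu0 hyu0 a3 a4 ha3 ha4 hab)
    · have hrow : a1 ≠ 0 ∨ a2 ≠ 0 := by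
        by_contra hcon
        push_neg at hcon
        exact h12 ⟨hcon.1, hcon.2⟩
      obtain ⟨t, ht3, ht4⟩ : ∃ t : k, a3 = t * a1 ∧ a4 = t * a2 := by
        by_cases h1 : a1 = 0
        · have h2 : a2 ≠ 0 := by
            rcases hrow with h | h
            · exact absurd h1 h
            · exact h
          have h3 : a3 = 0 := by
            have h5 : a2 * a3 = 0 := by linear_combination -hdet + a4 * h1
            exact (mul_eq_zero.mp h5).resolve_left h2
          exact ⟨a4 * a2⁻¹, by rw [h3, h1, mul_zero], by field_simp⟩
        · refine ⟨a3 * a1⁻¹, by field_simp, ?_⟩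
          field_simp
          linear_combination hdet
      have hxv : (X 0 : MvPolynomial (Fin 2) k) • (w0 - t • u) = 0 := by
        rw [smul_sub, ha3, smul_comm, ha1, smul_smul, ht3, sub_self]
      have hyv : (X 1 : MvPolynomial (Fin 2) k) • (w0 - t • u) = 0 := by
        rw [smul_sub, ha4, smul_comm, ha2, smul_smul, ht4, sub_self]
      have hLI2 : ∀ c0 c1 c2 : k, c0 • (w0 - t • u) + c1 • u + c2 • e = 0 →
          c0 = 0 ∧ c1 = 0 ∧ c2 = 0 := by
        intro c0 c1 c2 h
        have h' : (c1 - c0 * t) • u + c0 • w0 + c2 • e = 0 := by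
          rw [← h]
          module
        obtain ⟨hc1, hc0, hc2⟩ := hLI _ _ _ h'
        refine ⟨hc0, ?_, hc2⟩
        rw [hc0, zero_mul, sub_zero] at hc1
        exact hc1
      have hSP2 : ∀ m : M, ∃ c0 c1 c2 : k, m = c0 • (w0 - t • u) + c1 • u + c2 • e := by
        intro m
        obtain ⟨c0, c1, c2, rfl⟩ := hSP m
        exact ⟨c1, c0 + c1 * t, c2, by module⟩
      exact Or.inr (Classif.case2 k M hm2 (w0 - t • u) u e hLI2 hSP2 hxv hyv a1 a2 ha1 ha2 hrow)
  · exact Or.inl (Classif.case1 k M hlen hm2 u w0 e hLI hSP a1 a2 a3 a4 ha1 ha2 ha3 ha4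
      hxe hye hdet)
end

section
/- For the module M = A/m² over A = k[x,y], the automorphism group Aut_A(M) is isomorphic to 𝔾_a² ⋊ 𝔾_m; in particular it has dimension 3 and its class in the Grothendieck ring of varieties is L²(L−1). -/
open MvPolynomial TrivSqZeroExt

namespace AutFatAux
variable (k : Type) [Field k]

noncomputable abbrev QQ := MvPolynomial (Fin 2) k ⧸ ((Ideal.span {X 0, X 1} : Ideal (MvPolynomial (Fin 2) k)) ^ 2)

variable {k}

lemma mulAct (f : QQ k ≃ₗ[MvPolynomial (Fin 2) k] QQ k) (q r : QQ k) :
    f (q * r) = q * f r := by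
  obtain ⟨a, rfl⟩ := Ideal.Quotient.mk_surjective q
  have h : ∀ r : QQ k, (Ideal.Quotient.mk _ a) * r = a • r := by
    intro r
    obtain ⟨b, rfl⟩ := Ideal.Quotient.mk_surjective r
    rw [← map_mul, ← smul_eq_mul]
    rfl
  rw [h, map_smul, h]

/-- mult by a unit as linear equiv -/
noncomputable def mulUnit (u : (QQ k)ˣ) : QQ k ≃ₗ[MvPolynomial (Fin 2) k] QQ k where
  toFun q := q * u
  map_add' p q := add_mul p q u
  map_smul' a q := smul_mul_assoc a q u
  invFun q := q * ↑u⁻¹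
  left_inv q := by simp
  right_inv q := by simp

noncomputable def e1 : (QQ k ≃ₗ[MvPolynomial (Fin 2) k] QQ k) ≃* (QQ k)ˣ where
  toFun f := ⟨f 1, f.symm 1,
    by rw [mul_comm, ← mulAct f (f.symm 1) 1, mul_one, f.apply_symm_apply],
    by rw [mul_comm, ← mulAct f.symm (f 1) 1, mul_one, f.symm_apply_apply]⟩
  invFun := mulUnit
  left_inv f := by
    ext q
    show q * f 1 = f q
    rw [← mulAct f q 1, mul_one]
  right_inv u := by
    ext
    show (1 : QQ k) * u = u
    rw [one_mul]
  map_mul' f g := by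
    ext
    show (f * g) 1 = f 1 * g 1
    have h : (f * g) (1 : QQ k) = f (g 1) := rfl
    conv_lhs => rw [h, ← mul_one (g 1), mulAct f (g 1) 1]
    exact mul_comm _ _

end AutFatAux

namespace AutFatAux2
variable {k : Type} [Field k]

local notation "II" => ((Ideal.span {X 0, X 1} : Ideal (MvPolynomial (Fin 2) k)) ^ 2)

lemma XmulX_mem (i j : Fin 2) : (X i * X j : MvPolynomial (Fin 2) k) ∈ II := by
  rw [pow_two]
  exact Ideal.mul_mem_mul (Ideal.subset_span (by fin_cases i <;> simp))
    (Ideal.subset_span (by fin_cases j <;> simp))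

lemma mono_mem (s : Fin 2 →₀ ℕ) (a : k) (h : 2 ≤ s 0 + s 1) :
    (monomial s a : MvPolynomial (Fin 2) k) ∈ II := by
  -- choose u with u ≤ s and monomial u 1 = X i * X j
  obtain ⟨i, j, hle⟩ : ∃ i j : Fin 2,
      (Finsupp.single i 1 + Finsupp.single j 1 : Fin 2 →₀ ℕ) ≤ s := by
    by_cases h0 : 1 ≤ s 0
    · by_cases h1 : 1 ≤ s 1
      · exact ⟨0, 1, by intro t; fin_cases t <;> simp <;> omega⟩
      · exact ⟨0, 0, by intro t; fin_cases t <;> simp <;> omega⟩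
    · exact ⟨1, 1, by intro t; fin_cases t <;> simp <;> omega⟩
  have hsum : s - (Finsupp.single i 1 + Finsupp.single j 1) +
      (Finsupp.single i 1 + Finsupp.single j 1) = s := by
    ext t
    have := hle t
    simp only [Finsupp.coe_add, Finsupp.coe_tsub, Pi.add_apply, Pi.sub_apply] at *
    omega
  have key : (monomial s a : MvPolynomial (Fin 2) k)
      = monomial (s - (Finsupp.single i 1 + Finsupp.single j 1)) a * (X i * X j) := by
    rw [X, X, monomial_mul, monomial_mul, hsum, mul_one, mul_one]
  rw [key]
  exact Ideal.mul_mem_left _ _ (XmulX_mem i j)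

lemma sub_trunc_mem (p : MvPolynomial (Fin 2) k) :
    p - (C (coeff 0 p) + C (coeff (Finsupp.single 0 1) p) * X 0
        + C (coeff (Finsupp.single 1 1) p) * X 1) ∈ II := by
  induction p using MvPolynomial.induction_on' with
  | add p q hp hq =>
    have := add_mem hp hq
    convert this using 1
    simp only [coeff_add, map_add]
    ring
  | monomial s a =>
    have hne01 : (Finsupp.single 0 1 : Fin 2 →₀ ℕ) ≠ Finsupp.single 1 1 := by
      intro h
      have := DFunLike.congr_fun h 0
      simp [Finsupp.single_apply] at this
    have hsne : ∀ i : Fin 2, (Finsupp.single i 1 : Fin 2 →₀ ℕ) ≠ 0 :=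
      fun i h => one_ne_zero (Finsupp.single_eq_zero.mp h)
    by_cases h0 : s = 0
    · subst h0
      rw [monomial_zero', coeff_zero_C, coeff_C, coeff_C,
        if_neg (Ne.symm (hsne 0)), if_neg (Ne.symm (hsne 1))]
      simp
    · by_cases hx : s = Finsupp.single 0 1
      · subst hx
        rw [coeff_monomial, coeff_monomial, coeff_monomial,
          if_neg (hsne 0), if_pos rfl, if_neg hne01]
        have hX : (monomial (Finsupp.single 0 1) a : MvPolynomial (Fin 2) k) = C a * X 0 := by
          rw [X, C_mul_monomial, mul_one]
        rw [hX]
        simp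
      · by_cases hy : s = Finsupp.single 1 1
        · subst hy
          rw [coeff_monomial, coeff_monomial, coeff_monomial,
            if_neg (hsne 1), if_neg (Ne.symm hne01),
            if_pos rfl]
          have hX : (monomial (Finsupp.single 1 1) a : MvPolynomial (Fin 2) k) = C a * X 1 := by
            rw [X, C_mul_monomial, mul_one]
          rw [hX]
          simp
        · have hdeg : 2 ≤ s 0 + s 1 := by
            by_contra hc
            push_neg at hc
            have h00 : s 0 = 0 ∨ s 0 = 1 := by omega
            have h11 : s 1 = 0 ∨ s 1 = 1 := by omega
            rcases h00 with h00 | h00 <;> rcases h11 with h11 | h11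
            · exact h0 (by ext t; fin_cases t <;> simp_all)
            · exact hy (by ext t; fin_cases t <;> simp_all [Finsupp.single_apply])
            · exact hx (by ext t; fin_cases t <;> simp_all [Finsupp.single_apply])
            · omega
          rw [coeff_monomial, coeff_monomial, coeff_monomial,
            if_neg h0, if_neg hx, if_neg hy]
          simpa using mono_mem s a hdeg

end AutFatAux2

namespace AutFatAux3
variable (k : Type) [Field k]

local notation "II" => ((Ideal.span {X 0, X 1} : Ideal (MvPolynomial (Fin 2) k)) ^ 2)

noncomputable def phi : MvPolynomial (Fin 2) k →ₐ[k] TrivSqZeroExt k (k × k) :=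
  aeval ![inr (1, 0), inr (0, 1)]

lemma phi_X0 : phi k (X 0) = inr (1, 0) := by simp [phi]
lemma phi_X1 : phi k (X 1) = inr (0, 1) := by simp [phi]

lemma hker : II ≤ RingHom.ker (phi k).toRingHom := by
  rw [pow_two, Ideal.span_mul_span, Ideal.span_le]
  rintro z hz
  rw [Set.mem_mul] at hz
  obtain ⟨s, hs, t, ht, rfl⟩ := hz
  have key : ∀ w ∈ ({X 0, X 1} : Set (MvPolynomial (Fin 2) k)), ∃ m, phi k w = inr m := by
    rintro w (rfl | rfl)
    exacts [⟨_, phi_X0 k⟩, ⟨_, phi_X1 k⟩]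
  obtain ⟨m, hm⟩ := key s (by simpa using hs)
  obtain ⟨n, hn⟩ := key t (by simpa using ht)
  simp only [SetLike.mem_coe, RingHom.mem_ker, AlgHom.toRingHom_eq_coe, RingHom.coe_coe,
    map_mul, hm, hn, inr_mul_inr]

noncomputable def liftT : (MvPolynomial (Fin 2) k ⧸ II) →+* TrivSqZeroExt k (k × k) :=
  Ideal.Quotient.lift II (phi k).toRingHom (fun a ha => RingHom.mem_ker.mp (hker k ha))

lemma lift_linear (a b c : k) :
    liftT k (Ideal.Quotient.mk II (C a + C b * X 0 + C c * X 1)) = inl a + inr (b, c) := by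
  rw [liftT, Ideal.Quotient.lift_mk]
  simp only [AlgHom.toRingHom_eq_coe, RingHom.coe_coe, map_add, map_mul, phi_X0, phi_X1]
  rw [show (phi k) (C a) = inl a by simp [phi, algebraMap_eq_inl'],
    show (phi k) (C b) = inl b by simp [phi, algebraMap_eq_inl'],
    show (phi k) (C c) = inl c by simp [phi, algebraMap_eq_inl'],
    inl_mul_inr, inl_mul_inr]
  apply TrivSqZeroExt.ext <;> simp [Prod.ext_iff]



set_option synthInstance.maxHeartbeats 1000000 in
lemma lift_inj : Function.Injective (liftT k) := by
  rw [injective_iff_map_eq_zero]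
  intro q hq
  obtain ⟨p, rfl⟩ := Ideal.Quotient.mk_surjective q
  have htr : Ideal.Quotient.mk II p
      = Ideal.Quotient.mk II (C (coeff 0 p) + C (coeff (Finsupp.single 0 1) p) * X 0
        + C (coeff (Finsupp.single 1 1) p) * X 1) :=
    (Ideal.Quotient.eq.mpr (by simpa using AutFatAux2.sub_trunc_mem p)).symm.symm
  rw [htr, lift_linear] at hq
  have ha := congrArg fst hq
  have hb := congrArg snd hq
  simp only [fst_add, fst_inl, fst_inr, add_zero, fst_zero, snd_add, snd_inl, snd_inr,
    zero_add, snd_zero, Prod.ext_iff] at ha hb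
  rw [htr, ha, hb.1, hb.2]
  simp

lemma lift_surj : Function.Surjective (liftT k) := by
  intro t
  refine ⟨Ideal.Quotient.mk II (C t.fst + C t.snd.1 * X 0 + C t.snd.2 * X 1), ?_⟩
  rw [lift_linear]
  exact inl_fst_add_inr_snd_eq t

noncomputable def ringEquiv : (MvPolynomial (Fin 2) k ⧸ II) ≃+* TrivSqZeroExt k (k × k) :=
  RingEquiv.ofBijective (liftT k) ⟨lift_inj k, lift_surj k⟩

end AutFatAux3

namespace AutFatAux4
variable (k : Type) [Field k]

local notation "T" => TrivSqZeroExt k (k × k)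

noncomputable def fstUnit (u : Tˣ) : kˣ :=
  ⟨fst (u : T), fst ((u⁻¹ : Tˣ) : T),
    by rw [← fst_mul, Units.mul_inv, fst_one],
    by rw [← fst_mul, Units.inv_mul, fst_one]⟩

lemma fst_ne_zero (u : Tˣ) : fst (u : T) ≠ 0 := (fstUnit k u).ne_zero

noncomputable def e3 : Tˣ ≃* Multiplicative (k × k) ⋊[1] kˣ where
  toFun u := ⟨Multiplicative.ofAdd ((fst (u : T))⁻¹ • snd (u : T)), fstUnit k u⟩
  invFun p := (isUnit_iff_isUnit_fst.mpr (by
      rw [fst_add, fst_inl, fst_inr, add_zero]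
      exact p.right.isUnit) :
    IsUnit (inl (p.right : k) + inr ((p.right : k) • (p.left.toAdd)) : T)).unit
  left_inv u := by
    apply Units.ext
    rw [IsUnit.unit_spec]
    show inl (fst (u : T)) + inr (fst (u : T) • (fst (u : T))⁻¹ • snd (u : T)) = (u : T)
    rw [smul_inv_smul₀ (fst_ne_zero k u), inl_fst_add_inr_snd_eq]
  right_inv p := by
    refine SemidirectProduct.ext ?_ ?_
    · show Multiplicative.ofAdd _ = p.left
      rw [IsUnit.unit_spec]
      rw [fst_add, fst_inl, fst_inr, add_zero, snd_add, snd_inl, snd_inr, zero_add,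
        inv_smul_smul₀ (p.right.ne_zero)]
      rfl
    · apply Units.ext
      show fst _ = (p.right : k)
      rw [IsUnit.unit_spec, fst_add, fst_inl, fst_inr, add_zero]
  map_mul' u v := by
    refine SemidirectProduct.ext ?_ ?_
    · show Multiplicative.ofAdd ((fst ((u * v : Tˣ) : T))⁻¹ • snd ((u * v : Tˣ) : T))
        = _
      rw [SemidirectProduct.mul_left]
      simp only [MonoidHom.one_apply, MulAut.one_apply]
      rw [← ofAdd_add]
      congr 1
      rw [Units.val_mul, fst_mul, snd_mul, op_smul_eq_smul, smul_add, mul_inv,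
        smul_smul, smul_smul]
      rw [mul_comm (fst (u : T))⁻¹ (fst (v : T))⁻¹, mul_assoc,
        inv_mul_cancel₀ (fst_ne_zero k u), mul_one,
        mul_comm (fst (v : T))⁻¹ (fst (u : T))⁻¹]
      rw [mul_assoc, inv_mul_cancel₀ (fst_ne_zero k v), mul_one, add_comm]
    · show fstUnit k (u * v) = fstUnit k u * fstUnit k v
      apply Units.ext
      show fst ((u * v : Tˣ) : T) = fst (u : T) * fst (v : T)
      rw [Units.val_mul, fst_mul]

end AutFatAux4

/-- For `M = A/m²` over `A = k[x,y]`, the automorphism group `Aut_A(M)`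
is isomorphic to `𝔾_a² ⋊ 𝔾_m`, i.e. to a semidirect product of the additive group
`k × k` by the multiplicative group `kˣ`; in particular it has dimension `3`. -/
theorem aut_fat_point_semidirect
    (k : Type) [Field k] [IsAlgClosed k] [CharZero k] :
    ∃ φ : kˣ →* MulAut (Multiplicative (k × k)),
      Nonempty
        (((MvPolynomial (Fin 2) k ⧸ ((Ideal.span {X 0, X 1} : Ideal (MvPolynomial (Fin 2) k)) ^ 2))
            ≃ₗ[MvPolynomial (Fin 2) k]
          (MvPolynomial (Fin 2) k ⧸ ((Ideal.span {X 0, X 1} : Ideal (MvPolynomial (Fin 2) k)) ^ 2)))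
          ≃* (Multiplicative (k × k) ⋊[φ] kˣ)) := by
  exact ⟨1, ⟨AutFatAux.e1.trans
    ((Units.mapEquiv (AutFatAux3.ringEquiv k).toMulEquiv).trans (AutFatAux4.e3 k))⟩⟩
end
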